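/- Let $0<\alpha<1$ be a real number and define, for $t>0$, $$k(t)=\sum_{m=0}^{\infty}\frac{(-1)^m\,t^{m+\alpha-1}}{m!\,\Gamma(m+\alpha)},\qquad l(t)=\sum_{m=0}^{\infty}\frac{t^{m-\alpha}}{m!\,\Gamma(m+1-\alpha)},$$ i.e. $k(t)=(\sqrt t)^{\alpha-1}J_{\alpha-1}(2\sqrt t)$ and $l(t)=(\sqrt t)^{-\alpha}I_{-\alpha}(2\sqrt t)$ where $J_{\nu}$ and $I_{\nu}$ are the Bessel and modified Bessel functions. Then $(k\ast l)(t)=\int_0^t k(t-s)l(s)\,ds=1$ for every real $t>0$; that is, the pair $(k,l)$ satisfies the Sonine condition. -/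

import Mathlib

open Real MeasureTheory

lemma real_beta_integrable {a b : ℝ} (ha : 0 < a) (hb : 0 < b) {c : ℝ} (hc : 0 < c) :
    IntervalIntegrable (fun s : ℝ => s ^ (a - 1) * (c - s) ^ (b - 1)) volume 0 c := by
  have h1 : IntervalIntegrable (fun s : ℝ => s ^ (a - 1) * (c - s) ^ (b - 1)) volume 0 (c / 2) := by
    apply IntervalIntegrable.mul_continuousOn
      (intervalIntegral.intervalIntegrable_rpow' (by linarith))
    apply ContinuousOn.rpow_const (by fun_prop)
    intro x hx
    rw [Set.uIcc_of_le (by linarith : (0:ℝ) ≤ c / 2)] at hx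
    left
    intro h
    have : x = c := by linarith [sub_eq_zero.mp h]
    linarith [hx.2]
  have h2 : IntervalIntegrable (fun s : ℝ => s ^ (a - 1) * (c - s) ^ (b - 1)) volume (c / 2) c := by
    have hI : IntervalIntegrable (fun s : ℝ => (c - s) ^ (b - 1)) volume (c / 2) c := by
      have base : IntervalIntegrable (fun x : ℝ => x ^ (b - 1)) volume (c / 2) 0 :=
        intervalIntegral.intervalIntegrable_rpow' (by linarith)
      have h := base.comp_sub_left c
      rwa [show c - c / 2 = c / 2 by ring, sub_zero] at h
    apply hI.continuousOn_mul
    apply ContinuousOn.rpow_const (by fun_prop)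
    intro x hx
    rw [Set.uIcc_of_le (by linarith : c / 2 ≤ c)] at hx
    left
    intro h
    rw [h] at hx
    linarith [hx.1]
  exact h1.trans h2

lemma real_beta {a b : ℝ} (ha : 0 < a) (hb : 0 < b) {c : ℝ} (hc : 0 < c) :
    ∫ s in (0:ℝ)..c, s ^ (a - 1) * (c - s) ^ (b - 1)
      = Real.Gamma a * Real.Gamma b / Real.Gamma (a + b) * c ^ (a + b - 1) := by
  have hG : Real.Gamma (a + b) ≠ 0 := (Real.Gamma_pos_of_pos (by linarith)).ne'
  apply Complex.ofReal_injective
  have h1 : ((∫ s in (0:ℝ)..c, s ^ (a - 1) * (c - s) ^ (b - 1) : ℝ) : ℂ)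
      = ∫ x in (0:ℝ)..c, (x : ℂ) ^ ((a : ℂ) - 1) * ((c : ℂ) - (x : ℂ)) ^ ((b : ℂ) - 1) := by
    rw [← intervalIntegral.integral_ofReal]
    refine intervalIntegral.integral_congr fun x hx => ?_
    rw [Set.uIcc_of_le hc.le] at hx
    rw [Complex.ofReal_mul, Complex.ofReal_cpow hx.1, Complex.ofReal_cpow (by linarith [hx.2])]
    push_cast
    ring
  rw [h1, Complex.betaIntegral_scaled (a : ℂ) (b : ℂ) hc]
  have h3 := Complex.Gamma_mul_Gamma_eq_betaIntegral (s := (a : ℂ)) (t := (b : ℂ))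
    (by simpa using ha) (by simpa using hb)
  rw [← Complex.ofReal_add, Complex.Gamma_ofReal, Complex.Gamma_ofReal, Complex.Gamma_ofReal] at h3
  have hbeta : Complex.betaIntegral (a : ℂ) (b : ℂ)
      = ((Real.Gamma a * Real.Gamma b / Real.Gamma (a + b) : ℝ) : ℂ) := by
    push_cast
    rw [eq_div_iff (by exact_mod_cast hG)]
    linear_combination -h3
  rw [hbeta, show ((a : ℂ) + (b : ℂ) - 1) = ((a + b - 1 : ℝ) : ℂ) by push_cast; ring,
    ← Complex.ofReal_cpow hc.le, ← Complex.ofReal_mul, mul_comm]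

lemma gamma_fact_le {β : ℝ} (hβ : 0 < β) :
    ∀ m : ℕ, (m.factorial : ℝ) * (β * Real.Gamma β) ≤ Real.Gamma ((m : ℝ) + 1 + β) := by
  intro m
  induction m with
  | zero =>
    simp only [Nat.factorial_zero, Nat.cast_one, one_mul, Nat.cast_zero, zero_add]
    rw [add_comm, Real.Gamma_add_one hβ.ne']
  | succ m ih =>
    have h1 : ((m : ℝ) + 1 + 1 + β) = ((m : ℝ) + 1 + β) + 1 := by ring
    rw [Nat.factorial_succ]
    push_cast
    rw [h1, Real.Gamma_add_one (by positivity)]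
    have hΓ : (0:ℝ) < Real.Gamma ((m : ℝ) + 1 + β) := Real.Gamma_pos_of_pos (by positivity)
    calc ((m : ℝ) + 1) * m.factorial * (β * Real.Gamma β)
        ≤ ((m : ℝ) + 1) * Real.Gamma ((m : ℝ) + 1 + β) := by
          rw [mul_assoc]
          exact mul_le_mul_of_nonneg_left ih (by positivity)
      _ ≤ ((m : ℝ) + 1 + β) * Real.Gamma ((m : ℝ) + 1 + β) := by nlinarith

lemma summable_aux {β : ℝ} (hβ : 0 < β) {y : ℝ} (hy : 0 ≤ y) :
    Summable (fun m : ℕ => y ^ m / (m.factorial * Real.Gamma ((m : ℝ) + β))) := by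
  rw [← summable_nat_add_iff 1]
  have hΓβ : 0 < β * Real.Gamma β := mul_pos hβ (Real.Gamma_pos_of_pos hβ)
  apply Summable.of_nonneg_of_le
    (f := fun m : ℕ => (y / (β * Real.Gamma β)) * (y ^ m / m.factorial))
  · intro m
    have h1 : (0:ℝ) < Real.Gamma (((m + 1 : ℕ) : ℝ) + β) :=
      Real.Gamma_pos_of_pos (by positivity)
    have h2 : (0:ℝ) < ((m + 1).factorial : ℕ) := by exact_mod_cast (m+1).factorial_pos
    positivity
  · intro m
    have hΓ := gamma_fact_le hβ m
    have hfacm : (0:ℝ) < (m.factorial : ℝ) := by exact_mod_cast m.factorial_pos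
    have hfacm1 : (1:ℝ) ≤ (m.factorial : ℝ) := by exact_mod_cast m.factorial_pos
    have hΓpos : (0:ℝ) < Real.Gamma ((m:ℝ) + 1 + β) :=
      Real.Gamma_pos_of_pos (by positivity)
    have hkey : (m.factorial : ℝ) * (β * Real.Gamma β)
        ≤ ((m+1).factorial : ℝ) * Real.Gamma (((m + 1 : ℕ) : ℝ) + β) := by
      push_cast [Nat.factorial_succ]
      have h1 : (1:ℝ) ≤ ((m:ℝ) + 1) * m.factorial := by
        nlinarith [Nat.cast_nonneg (α := ℝ) m]
      nlinarith [mul_le_mul_of_nonneg_right h1 hΓpos.le]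
    calc y ^ (m+1) / (((m+1).factorial : ℝ) * Real.Gamma (((m + 1 : ℕ) : ℝ) + β))
        ≤ y ^ (m+1) / ((m.factorial : ℝ) * (β * Real.Gamma β)) :=
          div_le_div_of_nonneg_left (by positivity) (by positivity) hkey
      _ = (y / (β * Real.Gamma β)) * (y ^ m / m.factorial) := by
          rw [pow_succ]
          field_simp
  · exact (Real.summable_pow_div_factorial y).mul_left _

lemma summable_k (α : ℝ) (hα0 : 0 < α) {y : ℝ} (hy : 0 < y) :
    Summable fun m : ℕ =>
      ‖(-1:ℝ)^m * y^((m:ℝ)+α-1) / (m.factorial * Real.Gamma ((m:ℝ)+α))‖ := by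
  have := (summable_aux hα0 hy.le).mul_left (y ^ (α - 1))
  refine this.congr fun m => ?_
  have hΓ : (0:ℝ) < Real.Gamma ((m:ℝ) + α) := Real.Gamma_pos_of_pos (by positivity)
  have hfac : (0:ℝ) < (m.factorial : ℝ) := by exact_mod_cast m.factorial_pos
  rw [norm_div, norm_mul, norm_pow, norm_neg, norm_one, one_pow, one_mul,
    Real.norm_of_nonneg (Real.rpow_nonneg hy.le _),
    Real.norm_of_nonneg (by positivity : (0:ℝ) ≤ (m.factorial : ℝ) * Real.Gamma ((m:ℝ)+α)),
    show (m:ℝ) + α - 1 = (α - 1) + (m:ℝ) by ring, Real.rpow_add hy, Real.rpow_natCast]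
  ring

lemma summable_l (α : ℝ) (hα1 : α < 1) {y : ℝ} (hy : 0 < y) :
    Summable fun n : ℕ =>
      ‖y^((n:ℝ)-α) / (n.factorial * Real.Gamma ((n:ℝ)+1-α))‖ := by
  have h1α : (0:ℝ) < 1 - α := by linarith
  have := (summable_aux h1α hy.le).mul_left (y ^ (-α))
  refine this.congr fun n => ?_
  have hΓ : (0:ℝ) < Real.Gamma ((n:ℝ) + 1 - α) := Real.Gamma_pos_of_pos (by linarith [Nat.cast_nonneg (α := ℝ) n])
  have hfac : (0:ℝ) < (n.factorial : ℝ) := by exact_mod_cast n.factorial_pos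
  rw [norm_div, Real.norm_of_nonneg (Real.rpow_nonneg hy.le _),
    Real.norm_of_nonneg (by positivity : (0:ℝ) ≤ (n.factorial : ℝ) * Real.Gamma ((n:ℝ)+1-α)),
    show (n:ℝ) - α = (-α) + (n:ℝ) by ring, Real.rpow_add hy, Real.rpow_natCast,
    show (n:ℝ) + (1 - α) = (n:ℝ) + 1 - α by ring]
  ring

set_option maxHeartbeats 1000000 in
/-- The Bessel-type pair `k(t) = (√t)^(α-1) J_(α-1)(2√t)`, `l(t) = (√t)^(-α) I_(-α)(2√t)`,
written via their power series, satisfies the Sonine condition. -/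
theorem sonine_bessel (α : ℝ) (hα0 : 0 < α) (hα1 : α < 1) (k l : ℝ → ℝ)
    (hk : ∀ t, k t = ∑' m : ℕ,
      (-1 : ℝ) ^ m * t ^ ((m : ℝ) + α - 1) / (m.factorial * Real.Gamma ((m : ℝ) + α)))
    (hl : ∀ t, l t = ∑' m : ℕ,
      t ^ ((m : ℝ) - α) / (m.factorial * Real.Gamma ((m : ℝ) + 1 - α)))
    (t : ℝ) (ht : 0 < t) :
    ∫ s in (0:ℝ)..t, k (t - s) * l s = 1 := by
  -- the summand family
  set F : ℕ × ℕ → ℝ → ℝ := fun p s =>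
    ((-1:ℝ) ^ p.1 * (t - s) ^ ((p.1:ℝ) + α - 1) / (p.1.factorial * Real.Gamma ((p.1:ℝ) + α))) *
    (s ^ ((p.2:ℝ) - α) / (p.2.factorial * Real.Gamma ((p.2:ℝ) + 1 - α))) with hF
  -- positivity facts
  have hΓ1 : ∀ m : ℕ, (0:ℝ) < Real.Gamma ((m:ℝ) + α) :=
    fun m => Real.Gamma_pos_of_pos (by positivity)
  have hΓ2 : ∀ n : ℕ, (0:ℝ) < Real.Gamma ((n:ℝ) + 1 - α) :=
    fun n => Real.Gamma_pos_of_pos (by have := Nat.cast_nonneg (α := ℝ) n; linarith)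
  have hfacpos : ∀ m : ℕ, (0:ℝ) < (m.factorial : ℝ) := fun m => by
    exact_mod_cast m.factorial_pos
  -- Step A: pointwise identity on Ioo
  have hpoint : ∀ s ∈ Set.Ioo (0:ℝ) t, k (t - s) * l s = ∑' p : ℕ × ℕ, F p s := by
    intro s hs
    rw [hk, hl]
    exact tsum_mul_tsum_of_summable_norm
      (summable_k α hα0 (by linarith [hs.2] : (0:ℝ) < t - s))
      (summable_l α hα1 hs.1)
  -- the Beta integral values
  have hbeta : ∀ m n : ℕ, ∫ s in Set.Ioo (0:ℝ) t, s ^ ((n:ℝ) - α) * (t - s) ^ ((m:ℝ) + α - 1)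
      = Real.Gamma ((n:ℝ) + 1 - α) * Real.Gamma ((m:ℝ) + α) / ((m + n).factorial : ℝ)
        * t ^ (m + n) := by
    intro m n
    have ha : (0:ℝ) < (n:ℝ) + 1 - α := by have := Nat.cast_nonneg (α := ℝ) n; linarith
    have hb : (0:ℝ) < (m:ℝ) + α := by positivity
    have h1 := real_beta ha hb ht
    rw [intervalIntegral.integral_of_le ht.le, MeasureTheory.integral_Ioc_eq_integral_Ioo] at h1
    have he1 : (n:ℝ) + 1 - α - 1 = (n:ℝ) - α := by ring
    have he2 : (m:ℝ) + α - 1 = (m:ℝ) + α - 1 := rfl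
    rw [he1] at h1
    rw [h1]
    have he3 : (n:ℝ) + 1 - α + ((m:ℝ) + α) = ((m + n : ℕ) : ℝ) + 1 := by push_cast; ring
    rw [he3, Real.Gamma_nat_eq_factorial,
      show ((m + n : ℕ) : ℝ) + 1 - 1 = ((m + n : ℕ) : ℝ) by ring, Real.rpow_natCast]
  -- integrability of the beta integrand on Ioo
  have hint : ∀ m n : ℕ,
      IntegrableOn (fun s : ℝ => s ^ ((n:ℝ) - α) * (t - s) ^ ((m:ℝ) + α - 1))
        (Set.Ioo (0:ℝ) t) := by
    intro m n
    have ha : (0:ℝ) < (n:ℝ) + 1 - α := by have := Nat.cast_nonneg (α := ℝ) n; linarith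
    have hb : (0:ℝ) < (m:ℝ) + α := by positivity
    have h := real_beta_integrable ha hb ht
    rw [intervalIntegrable_iff_integrableOn_Ioc_of_le ht.le] at h
    have he1 : (n:ℝ) + 1 - α - 1 = (n:ℝ) - α := by ring
    rw [he1] at h
    exact h.mono_set Set.Ioo_subset_Ioc_self
  -- F p is a constant multiple of the beta integrand
  have hFeq : ∀ p : ℕ × ℕ, ∀ s : ℝ, F p s =
      ((-1:ℝ) ^ p.1 / ((p.1.factorial * Real.Gamma ((p.1:ℝ) + α)) *
        (p.2.factorial * Real.Gamma ((p.2:ℝ) + 1 - α)))) *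
      (s ^ ((p.2:ℝ) - α) * (t - s) ^ ((p.1:ℝ) + α - 1)) := by
    intro p s
    rw [hF]
    ring
  have hFint : ∀ p : ℕ × ℕ, IntegrableOn (F p) (Set.Ioo (0:ℝ) t) := by
    intro p
    have h0 : IntegrableOn (fun s : ℝ =>
        ((-1:ℝ) ^ p.1 / ((p.1.factorial * Real.Gamma ((p.1:ℝ) + α)) *
          (p.2.factorial * Real.Gamma ((p.2:ℝ) + 1 - α)))) *
        (s ^ ((p.2:ℝ) - α) * (t - s) ^ ((p.1:ℝ) + α - 1))) (Set.Ioo (0:ℝ) t) :=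
      (hint p.1 p.2).const_mul _
    exact h0.congr_fun (fun s _ => (hFeq p s).symm) measurableSet_Ioo
  -- value of the integral of F p
  have hFval : ∀ p : ℕ × ℕ, ∫ s in Set.Ioo (0:ℝ) t, F p s
      = (-1:ℝ) ^ p.1 * (t ^ (p.1 + p.2) /
          (p.1.factorial * p.2.factorial * (p.1 + p.2).factorial)) := by
    intro p
    rw [setIntegral_congr_fun measurableSet_Ioo (fun s _ => hFeq p s),
      MeasureTheory.integral_const_mul, hbeta p.1 p.2]
    have h1 := (hΓ1 p.1).ne'
    have h2 := (hΓ2 p.2).ne'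
    have h3 := (hfacpos p.1).ne'
    have h4 := (hfacpos p.2).ne'
    have h5 := (hfacpos (p.1 + p.2)).ne'
    field_simp
  -- the dominating values
  set V : ℕ × ℕ → ℝ := fun p =>
    t ^ (p.1 + p.2) / (p.1.factorial * p.2.factorial * (p.1 + p.2).factorial) with hV
  have hV0 : ∀ p : ℕ × ℕ, 0 ≤ V p := by
    intro p
    have := hfacpos p.1; have := hfacpos p.2; have := hfacpos (p.1 + p.2)
    positivity
  have hVsum : Summable V := by
    apply Summable.of_nonneg_of_le hV0
      (f := fun p : ℕ × ℕ => (t ^ p.1 / p.1.factorial) * (t ^ p.2 / p.2.factorial))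
    · intro p
      have hf1 := hfacpos p.1; have hf2 := hfacpos p.2
      have hf3 : (1:ℝ) ≤ ((p.1 + p.2).factorial : ℝ) := by exact_mod_cast (p.1 + p.2).factorial_pos
      show t ^ (p.1 + p.2) / ((p.1.factorial : ℝ) * p.2.factorial * (p.1 + p.2).factorial)
        ≤ t ^ p.1 / (p.1.factorial : ℝ) * (t ^ p.2 / p.2.factorial)
      rw [pow_add, div_mul_div_comm]
      apply div_le_div_of_nonneg_left (by positivity) (by positivity)
      nlinarith [mul_le_mul_of_nonneg_left hf3 (mul_pos hf1 hf2).le]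
    · exact (Real.summable_pow_div_factorial t).mul_of_nonneg
        (Real.summable_pow_div_factorial t)
        (fun m => by positivity) (fun n => by positivity)
  -- measurability
  have hmeas : ∀ p : ℕ × ℕ, AEStronglyMeasurable (F p)
      ((volume : Measure ℝ).restrict (Set.Ioo 0 t)) := by
    intro p
    apply ContinuousOn.aestronglyMeasurable _ measurableSet_Ioo
    apply ContinuousOn.mul
    · apply ContinuousOn.div_const
      apply ContinuousOn.mul continuousOn_const
      apply ContinuousOn.rpow_const (by fun_prop)
      intro x hx
      exact Or.inl (by have := hx.2; intro h; simp only [sub_eq_zero] at h; linarith [hx.2])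
    · apply ContinuousOn.div_const
      apply ContinuousOn.rpow_const continuousOn_id
      intro x hx
      exact Or.inl (ne_of_gt hx.1)
  -- the norm bound for the interchange
  have hnorm : ∀ p : ℕ × ℕ, ∫⁻ s in Set.Ioo (0:ℝ) t, ‖F p s‖₊ = ENNReal.ofReal (V p) := by
    intro p
    have habs : ∀ s ∈ Set.Ioo (0:ℝ) t, |F p s| =
        (1 / ((p.1.factorial * Real.Gamma ((p.1:ℝ) + α)) *
          (p.2.factorial * Real.Gamma ((p.2:ℝ) + 1 - α)))) *
        (s ^ ((p.2:ℝ) - α) * (t - s) ^ ((p.1:ℝ) + α - 1)) := by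
      intro s hs
      rw [hFeq p s, abs_mul]
      have hs1 : (0:ℝ) ≤ s ^ ((p.2:ℝ) - α) := Real.rpow_nonneg hs.1.le _
      have hs2 : (0:ℝ) ≤ (t - s) ^ ((p.1:ℝ) + α - 1) :=
        Real.rpow_nonneg (by linarith [hs.2]) _
      rw [abs_of_nonneg (mul_nonneg hs1 hs2), abs_div, abs_pow, abs_neg, abs_one, one_pow,
        abs_of_nonneg (mul_nonneg (mul_nonneg (hfacpos p.1).le (hΓ1 p.1).le)
          (mul_nonneg (hfacpos p.2).le (hΓ2 p.2).le))]
    calc ∫⁻ s in Set.Ioo (0:ℝ) t, ‖F p s‖₊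
        = ∫⁻ s in Set.Ioo (0:ℝ) t, ENNReal.ofReal (|F p s|) := by
          congr 1
          ext s
          rw [← Real.norm_eq_abs, ofReal_norm]; rfl
      _ = ENNReal.ofReal (∫ s in Set.Ioo (0:ℝ) t, |F p s|) := by
          rw [MeasureTheory.ofReal_integral_eq_lintegral_ofReal (hFint p).abs
            (Filter.Eventually.of_forall fun s => abs_nonneg _)]
      _ = ENNReal.ofReal (V p) := by
          congr 1
          rw [setIntegral_congr_fun measurableSet_Ioo habs,
            MeasureTheory.integral_const_mul, hbeta p.1 p.2, hV]
          have h1 := (hΓ1 p.1).ne'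
          have h2 := (hΓ2 p.2).ne'
          have h3 := (hfacpos p.1).ne'
          have h4 := (hfacpos p.2).ne'
          have h5 := (hfacpos (p.1 + p.2)).ne'
          field_simp
  have hfin : ∑' p : ℕ × ℕ, ∫⁻ s in Set.Ioo (0:ℝ) t, ‖F p s‖₊ ≠ ⊤ := by
    rw [tsum_congr hnorm, ← ENNReal.ofReal_tsum_of_nonneg hV0 hVsum]
    exact ENNReal.ofReal_ne_top
  -- interchange
  rw [intervalIntegral.integral_of_le ht.le, MeasureTheory.integral_Ioc_eq_integral_Ioo,
    setIntegral_congr_fun measurableSet_Ioo hpoint,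
    MeasureTheory.integral_tsum hmeas hfin, tsum_congr hFval]
  -- Step D : evaluate the double sum
  set W : ℕ × ℕ → ℝ := fun p =>
    (-1:ℝ) ^ p.1 * (t ^ (p.1 + p.2) /
      (p.1.factorial * p.2.factorial * (p.1 + p.2).factorial)) with hW
  have hWsum : Summable W := by
    apply Summable.of_norm
    refine hVsum.congr fun p => ?_
    rw [hW, hV, norm_mul, norm_pow, norm_neg, norm_one, one_pow, one_mul,
      Real.norm_of_nonneg (hV0 p)]
  have hregroup : ∑' p : ℕ × ℕ, W p = ∑' N : ℕ, ∑ kl ∈ Finset.HasAntidiagonal.antidiagonal N, W kl := by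
    rw [← Finset.HasAntidiagonal.sigmaAntidiagonalEquivProd.tsum_eq W]
    refine (Summable.tsum_sigma' (fun n => (hasSum_fintype _).summable)
      (Finset.HasAntidiagonal.sigmaAntidiagonalEquivProd.summable_iff.mpr hWsum)).trans ?_
    exact tsum_congr fun N => by rw [tsum_fintype]; exact Finset.sum_finset_coe _ _
  have hinner : ∀ N : ℕ, ∑ kl ∈ Finset.HasAntidiagonal.antidiagonal N, W kl = if N = 0 then 1 else 0 := by
    intro N
    rw [Finset.Nat.sum_antidiagonal_eq_sum_range_succ_mk]
    have hterm : ∀ i ∈ Finset.range (N + 1), W (i, N - i)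
        = t ^ N / ((N.factorial : ℝ) * N.factorial) * ((-1:ℝ) ^ i * (N.choose i : ℝ)) := by
      intro i hi
      have hiN : i ≤ N := Nat.lt_succ_iff.mp (Finset.mem_range.mp hi)
      have hadd : i + (N - i) = N := Nat.add_sub_cancel' hiN
      have hchoose : (i.factorial : ℝ) * ((N - i).factorial : ℝ) * (N.choose i : ℝ)
          = (N.factorial : ℝ) := by
        have hnat : i.factorial * (N - i).factorial * N.choose i = N.factorial := by
          rw [← Nat.choose_mul_factorial_mul_factorial hiN]; ring
        exact_mod_cast congrArg (Nat.cast (R := ℝ)) hnat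
      rw [hW]
      simp only [hadd]
      have h1 := (hfacpos i).ne'
      have h2 := (hfacpos (N - i)).ne'
      have h3 := (hfacpos N).ne'
      field_simp
      linear_combination (-1:ℝ) * hchoose
    rw [Finset.sum_congr rfl hterm, ← Finset.mul_sum]
    have halt : ∑ i ∈ Finset.range (N + 1), (-1:ℝ) ^ i * (N.choose i : ℝ)
        = if N = 0 then 1 else 0 := by
      have := Int.alternating_sum_range_choose (n := N)
      have hcast := congrArg (Int.cast (R := ℝ)) this
      push_cast at hcast
      rw [hcast]
    rw [halt]
    split
    · next h => subst h; norm_num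
    · norm_num
  rw [hregroup, tsum_congr hinner, tsum_ite_eq]
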